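/- Let c = 0.413 and define h : [0,1] → ℝ by h(y) = 1 − e^{−y}·( 3/4 + (1/4)·(1 + max(y − c, 0)/4)·exp(−max(y − c, 0)/4) )². Then h is concave on the interval [0,1]. -/

import Mathlib

open Real Set

noncomputable def Fq (t : ℝ) : ℝ := 3/4 + (1/4) * (1 + t/4) * Real.exp (-t/4)
noncomputable def Sq (t : ℝ) : ℝ := (1/32) * t * Real.exp (-t/4)

lemma hd_neg_quarter (t : ℝ) : HasDerivAt (fun t : ℝ => -t/4) (-1/4) t := by
  simpa using ((hasDerivAt_id t).neg.div_const 4)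

lemma hasDerivAt_Fq (t : ℝ) : HasDerivAt Fq (-(1/64) * t * Real.exp (-t/4)) t := by
  have h2 := (hd_neg_quarter t).exp
  have h3 : HasDerivAt (fun t : ℝ => (1:ℝ)/4 * (1 + t/4)) (1/4 * (1/4)) t := by
    simpa using (((hasDerivAt_id t).div_const 4).const_add 1).const_mul ((1:ℝ)/4)
  have h4 := (h3.mul h2).const_add ((3:ℝ)/4)
  have e : -(1/64) * t * Real.exp (-t/4)
      = 1/4 * (1/4) * Real.exp (-t/4) + 1/4 * (1 + t/4) * (Real.exp (-t/4) * (-1/4)) := by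
    ring
  exact e ▸ h4

lemma hasDerivAt_Sq (t : ℝ) : HasDerivAt Sq ((1/32) * (1 - t/4) * Real.exp (-t/4)) t := by
  have h2 := (hd_neg_quarter t).exp
  have h3 : HasDerivAt (fun t : ℝ => (1:ℝ)/32 * t) ((1:ℝ)/32) t := by
    simpa using (hasDerivAt_id t).const_mul ((1:ℝ)/32)
  have h4 := h3.mul h2
  have e : (1/32) * (1 - t/4) * Real.exp (-t/4)
      = 1/32 * Real.exp (-t/4) + 1/32 * t * (Real.exp (-t/4) * (-1/4)) := by
    ring
  exact e ▸ h4

noncomputable def phiq (y : ℝ) : ℝ :=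
  Real.exp (-y) * Fq (max (y - 0.413) 0) * (Fq (max (y - 0.413) 0) + Sq (max (y - 0.413) 0))

noncomputable def hq (y : ℝ) : ℝ := 1 - Real.exp (-y) * (Fq (max (y - 0.413) 0))^2

lemma Fq_zero : Fq 0 = 1 := by norm_num [Fq]
lemma Sq_zero : Sq 0 = 0 := by norm_num [Sq]

lemma hd_exp_neg (y : ℝ) : HasDerivAt (fun y : ℝ => Real.exp (-y)) (-Real.exp (-y)) y := by
  simpa using ((hasDerivAt_id y).neg).exp

-- derivative of Fq ∘ (max (· - c) 0) at c is 0
lemma hd_G_at_c : HasDerivAt (fun y : ℝ => Fq (max (y - 0.413) 0)) 0 0.413 := by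
  rw [hasDerivAt_iff_isLittleO]
  have hF : HasDerivAt Fq 0 0 := by simpa using hasDerivAt_Fq 0
  rw [hasDerivAt_iff_isLittleO] at hF
  simp only [sub_zero, smul_zero, smul_eq_mul, mul_zero] at hF ⊢
  have hu : Filter.Tendsto (fun y : ℝ => max (y - 0.413) 0) (nhds 0.413) (nhds 0) := by
    have : Continuous (fun y : ℝ => max (y - 0.413) 0) := by continuity
    have h0 : max ((0.413 : ℝ) - 0.413) 0 = 0 := by norm_num
    simpa [h0] using this.tendsto 0.413
  have h1 : (fun y : ℝ => Fq (max (y - 0.413) 0) - Fq 0)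
      =o[nhds 0.413] (fun y : ℝ => max (y - 0.413) 0) := hF.comp_tendsto hu
  have h2 : (fun y : ℝ => max (y - 0.413) 0) =O[nhds 0.413] (fun y : ℝ => y - 0.413) := by
    apply Asymptotics.isBigO_of_le
    intro y
    simp only [Real.norm_eq_abs]
    rcases le_total (y - 0.413) 0 with h | h
    · rw [max_eq_right h]; simp [abs_nonneg]
    · rw [max_eq_left h]
  have h3 := h1.trans_isBigO h2
  have h0 : max ((0.413:ℝ) - 0.413) 0 = 0 := by norm_num
  simpa [h0, Fq_zero] using h3

lemma hd_hq (y : ℝ) : HasDerivAt hq (phiq y) y := by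
  rcases lt_trichotomy y 0.413 with hy | hy | hy
  · -- y < c : hq = 1 - exp (-y) near y
    have hev : (fun y : ℝ => 1 - Real.exp (-y) * 1 ^ 2) =ᶠ[nhds y] hq := by
      filter_upwards [eventually_lt_nhds hy] with z hz
      have : max (z - 0.413) 0 = 0 := max_eq_right (by linarith)
      simp [hq, this, Fq_zero]
    have hd : HasDerivAt (fun y : ℝ => 1 - Real.exp (-y) * 1 ^ 2) (Real.exp (-y)) y := by
      have := ((hd_exp_neg y).mul_const ((1:ℝ)^2)).const_sub 1
      simpa using this
    have hmax : max (y - 0.413) 0 = 0 := max_eq_right (by linarith)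
    have : phiq y = Real.exp (-y) := by
      simp [phiq, hmax, Fq_zero, Sq_zero]
    rw [this]
    exact hd.congr_of_eventuallyEq hev.symm
  · -- y = c
    subst hy
    have hG := hd_G_at_c
    have hP := (hd_exp_neg 0.413).mul (hG.pow 2)
    have hd := hP.const_sub 1
    have hmax : max ((0.413:ℝ) - 0.413) 0 = 0 := by norm_num
    have : phiq 0.413 = Real.exp (-0.413) := by
      simp [phiq, hmax, Fq_zero, Sq_zero]
    rw [this]
    refine hd.congr_deriv ?_
    simp [hmax, Fq_zero]
  · -- y > c
    have hev : (fun z : ℝ => 1 - Real.exp (-z) * (Fq (z - 0.413)) ^ 2) =ᶠ[nhds y] hq := by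
      filter_upwards [eventually_gt_nhds hy] with z hz
      have : max (z - 0.413) 0 = z - 0.413 := max_eq_left (by linarith)
      simp [hq, this]
    have hG : HasDerivAt (fun z : ℝ => Fq (z - 0.413))
        (-(1/64) * (y - 0.413) * Real.exp (-(y - 0.413)/4)) y := by
      have := (hasDerivAt_Fq (y - 0.413)).comp y ((hasDerivAt_id y).sub_const 0.413)
      simpa [Function.comp_def] using this
    have hP := (hd_exp_neg y).mul (hG.pow 2)
    have hd := hP.const_sub 1
    have hmax : max (y - 0.413) 0 = y - 0.413 := max_eq_left (by linarith)
    have hval : phiq y = -(-Real.exp (-y) * Fq (y - 0.413) ^ 2 +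
        Real.exp (-y) * (2 * Fq (y - 0.413) ^ 1 *
          (-(1/64) * (y - 0.413) * Real.exp (-(y - 0.413)/4)))) := by
      simp only [phiq, hmax, Sq, pow_one]
      ring
    rw [hval]
    exact hd.congr_of_eventuallyEq hev.symm

lemma phiq_eq_left {y : ℝ} (hy : y ≤ 0.413) : phiq y = Real.exp (-y) := by
  have hmax : max (y - 0.413) 0 = 0 := max_eq_right (by linarith)
  simp [phiq, hmax, Fq_zero, Sq_zero]

lemma phiq_anti_left : AntitoneOn phiq (Set.Icc (0:ℝ) 0.413) := by
  intro x hx y hy hxy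
  rw [phiq_eq_left hx.2, phiq_eq_left hy.2]
  exact Real.exp_le_exp.2 (by linarith)

noncomputable def psiq (y : ℝ) : ℝ :=
  Real.exp (-y) * Fq (y - 0.413) * (Fq (y - 0.413) + Sq (y - 0.413))

lemma phiq_eq_right {y : ℝ} (hy : 0.413 ≤ y) : phiq y = psiq y := by
  have hmax : max (y - 0.413) 0 = y - 0.413 := max_eq_left (by linarith)
  simp [phiq, psiq, hmax]

lemma hd_psiq (y : ℝ) : HasDerivAt psiq
    (Real.exp (-y) * (Fq (y - 0.413) * (-(1/64) * (y - 0.413) * Real.exp (-(y - 0.413)/4)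
        + (1/32) * (1 - (y - 0.413)/4) * Real.exp (-(y - 0.413)/4))
      + (-(1/64) * (y - 0.413) * Real.exp (-(y - 0.413)/4)) * (Fq (y - 0.413) + Sq (y - 0.413))
      - Fq (y - 0.413) * (Fq (y - 0.413) + Sq (y - 0.413)))) y := by
  have hG : HasDerivAt (fun z : ℝ => Fq (z - 0.413))
      (-(1/64) * (y - 0.413) * Real.exp (-(y - 0.413)/4)) y := by
    simpa [Function.comp_def] using (hasDerivAt_Fq (y - 0.413)).comp y ((hasDerivAt_id y).sub_const 0.413)
  have hS : HasDerivAt (fun z : ℝ => Sq (z - 0.413))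
      ((1/32) * (1 - (y - 0.413)/4) * Real.exp (-(y - 0.413)/4)) y := by
    simpa [Function.comp_def] using (hasDerivAt_Sq (y - 0.413)).comp y ((hasDerivAt_id y).sub_const 0.413)
  have h := ((hd_exp_neg y).mul hG).mul (hG.add hS)
  refine h.congr_deriv ?_
  simp only [Pi.add_apply, Pi.mul_apply]
  ring

lemma Fq_le_one {t : ℝ} (ht : 0 ≤ t) : Fq t ≤ 1 := by
  have h1 : t/4 + 1 ≤ Real.exp (t/4) := Real.add_one_le_exp _
  have h2 : Real.exp (-t/4) * Real.exp (t/4) = 1 := by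
    rw [← Real.exp_add]; ring_nf; exact Real.exp_zero
  have h3 : (0:ℝ) < Real.exp (t/4) := Real.exp_pos _
  have h4 : (0:ℝ) < Real.exp (-t/4) := Real.exp_pos _
  have : (1 + t/4) * Real.exp (-t/4) ≤ 1 := by
    nlinarith
  simp only [Fq]
  nlinarith

lemma Fq_ge {t : ℝ} (ht : 0 ≤ t) : 3/4 ≤ Fq t := by
  have h4 : (0:ℝ) < Real.exp (-t/4) := Real.exp_pos _
  simp only [Fq]
  nlinarith

lemma psiq_deriv_nonpos {y : ℝ} (hy : y ∈ Set.Ioo (0.413:ℝ) 1) :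
    deriv psiq y ≤ 0 := by
  rw [(hd_psiq y).deriv]
  set t := y - 0.413 with ht
  clear_value t
  have ht0 : 0 ≤ t := by simp only [ht]; linarith [hy.1]
  have ht1 : t ≤ 1 := by simp only [ht]; linarith [hy.2]
  have hF1 : Fq t ≤ 1 := Fq_le_one ht0
  have hF2 : (3:ℝ)/4 ≤ Fq t := Fq_ge ht0
  have he : (0:ℝ) < Real.exp (-t/4) := Real.exp_pos _
  have he1 : Real.exp (-t/4) ≤ 1 := by
    rw [Real.exp_le_one_iff]; linarith
  have hS : 0 ≤ Sq t := by
    simp only [Sq]; positivity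
  have hey : (0:ℝ) < Real.exp (-y) := Real.exp_pos _
  have key : Fq t * (-(1/64) * t * Real.exp (-t/4) + (1/32) * (1 - t/4) * Real.exp (-t/4))
      + (-(1/64) * t * Real.exp (-t/4)) * (Fq t + Sq t)
      - Fq t * (Fq t + Sq t) ≤ -(1:ℝ)/2 := by
    nlinarith [mul_nonneg (mul_nonneg (by norm_num : (0:ℝ) ≤ 1/64) ht0) he.le,
      mul_nonneg hS ht0]
  nlinarith

lemma psiq_anti : AntitoneOn psiq (Set.Icc (0.413:ℝ) 1) := by
  have hdiff : ∀ y : ℝ, DifferentiableAt ℝ psiq y := fun y => (hd_psiq y).differentiableAt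
  apply antitoneOn_of_deriv_nonpos (convex_Icc _ _)
  · exact fun y _ => (hdiff y).continuousAt.continuousWithinAt
  · intro y hy
    exact (hdiff y).differentiableWithinAt
  · intro y hy
    rw [interior_Icc] at hy
    exact psiq_deriv_nonpos hy

lemma phiq_anti_right : AntitoneOn phiq (Set.Icc (0.413:ℝ) 1) := by
  intro x hx y hy hxy
  rw [phiq_eq_right hx.1, phiq_eq_right hy.1]
  exact psiq_anti hx hy hxy

lemma phiq_anti : AntitoneOn phiq (Set.Icc (0:ℝ) 1) := by
  intro x hx y hy hxy
  rcases le_total y 0.413 with h | h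
  · exact phiq_anti_left ⟨hx.1, le_trans hxy h⟩ ⟨hy.1, h⟩ hxy
  · rcases le_total x 0.413 with h' | h'
    · calc phiq y ≤ phiq 0.413 :=
            phiq_anti_right ⟨le_refl _, by norm_num⟩ ⟨h, hy.2⟩ h
        _ ≤ phiq x := phiq_anti_left ⟨hx.1, h'⟩ ⟨by norm_num, le_refl _⟩ h'
    · exact phiq_anti_right ⟨h', hx.2⟩ ⟨h, hy.2⟩ hxy

/-- Appendix B.6: concavity of Equation (11) (matched-budget lower bound of the
General SOCS for AdWords), with c = 0.413. -/
theorem concave_adwords_general_socs_convergence :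
    ConcaveOn ℝ (Set.Icc (0 : ℝ) 1)
      (fun y : ℝ => 1 - Real.exp (-y) *
        (3/4 + (1/4) * (1 + max (y - 0.413) 0 / 4)
          * Real.exp (-(max (y - 0.413) 0) / 4)) ^ 2) := by
  have heq : (fun y : ℝ => 1 - Real.exp (-y) *
      (3/4 + (1/4) * (1 + max (y - 0.413) 0 / 4)
        * Real.exp (-(max (y - 0.413) 0) / 4)) ^ 2) = hq := by
    funext y
    simp only [hq, Fq]
  rw [heq]
  have hdiff : ∀ y : ℝ, DifferentiableAt ℝ hq y := fun y => (hd_hq y).differentiableAt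
  apply AntitoneOn.concaveOn_of_deriv (convex_Icc _ _)
  · exact fun y _ => (hdiff y).continuousAt.continuousWithinAt
  · exact fun y _ => (hdiff y).differentiableWithinAt
  · intro x hx y hy hxy
    rw [(hd_hq x).deriv, (hd_hq y).deriv]
    rw [interior_Icc] at hx hy
    exact phiq_anti ⟨hx.1.le, hx.2.le⟩ ⟨hy.1.le, hy.2.le⟩ hxy
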